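/- Let (f_ε)_{ε∈(0,1)} be any family of functions {0,1,2} → ℝ² such that for each ε ∈ (0,1), f_ε is a global minimizer of Q_ε over all functions f : {0,1,2} → ℝ². Then as ε → 0⁺, softmax(f_ε(0)) → (1/2, 1/2), softmax(f_ε(1)) → (2/3, 1/3), and softmax(f_ε(2)) → (1/3, 2/3). -/

import Mathlib

open Real Filter

/-- softmax of a vector `v ∈ ℝ^d`: `softmax v j = exp (v j) / ∑ m, exp (v m)`. -/
noncomputable def softmax {d : ℕ} (v : Fin d → ℝ) : Fin d → ℝ :=
  fun j => Real.exp (v j) / ∑ m, Real.exp (v m)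

/-- A single hard-OKO cross-entropy term on the summed logits of a set. -/
noncomputable def toyLoss (f : Fin 3 → Fin 2 → ℝ) (x₁ x₂ x₃ : Fin 3) (y : Fin 2) : ℝ :=
  -Real.log (softmax (fun j => f x₁ j + f x₂ j + f x₃ j) y)

/-- The toy hard OKO risk `Q_ε` over functions `f : {0,1,2} → ℝ²`
(class 1 is index 0, class 2 is index 1). -/
noncomputable def toyRisk (ε : ℝ) (f : Fin 3 → Fin 2 → ℝ) : ℝ :=
  (1 - ε) ^ 3 / 2 * (toyLoss f 0 0 0 0 + toyLoss f 0 0 0 1)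
  + ε * (1 - ε) ^ 2 / 2 *
      (toyLoss f 0 0 2 0 + toyLoss f 1 0 0 0 + toyLoss f 0 1 0 0
        + toyLoss f 0 0 1 1 + toyLoss f 2 0 0 1 + toyLoss f 0 2 0 1)
  + ε ^ 2 * (1 - ε) / 2 *
      (toyLoss f 1 1 0 0 + toyLoss f 1 0 2 0 + toyLoss f 0 1 2 0
        + toyLoss f 2 2 0 1 + toyLoss f 2 0 1 1 + toyLoss f 2 1 0 1)
  + ε ^ 3 / 2 * (toyLoss f 1 1 2 0 + toyLoss f 2 2 1 1)

open Topology
noncomputable def LL (t : ℝ) : ℝ := Real.log (1 + Real.exp (-t))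

lemma softmax_two (v : Fin 2 → ℝ) (j : Fin 2) :
    softmax v j = Real.exp (v j) / (Real.exp (v 0) + Real.exp (v 1)) := by
  unfold softmax; rw [Fin.sum_univ_two]

lemma neg_log_softmax (v : Fin 2 → ℝ) :
    (-Real.log (softmax v 0) = LL (v 0 - v 1)) ∧
      (-Real.log (softmax v 1) = LL (v 1 - v 0)) := by
  have e0 := Real.exp_pos (v 0)
  have e1 := Real.exp_pos (v 1)
  have hs : (0:ℝ) < Real.exp (v 0) + Real.exp (v 1) := by positivity
  constructor
  · rw [softmax_two, Real.log_div e0.ne' hs.ne']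
    unfold LL
    rw [show -(v 0 - v 1) = v 1 - v 0 by ring, Real.exp_sub,
      show 1 + Real.exp (v 1) / Real.exp (v 0)
        = (Real.exp (v 0) + Real.exp (v 1)) / Real.exp (v 0) by field_simp,
      Real.log_div hs.ne' e0.ne', Real.log_exp]
    ring
  · rw [softmax_two, Real.log_div e1.ne' hs.ne']
    unfold LL
    rw [show -(v 1 - v 0) = v 0 - v 1 by ring, Real.exp_sub,
      show 1 + Real.exp (v 0) / Real.exp (v 1)
        = (Real.exp (v 0) + Real.exp (v 1)) / Real.exp (v 1) by field_simp; ring,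
      Real.log_div hs.ne' e1.ne', Real.log_exp]
    ring

lemma toyLoss_zero (f : Fin 3 → Fin 2 → ℝ) (x₁ x₂ x₃ : Fin 3) :
    toyLoss f x₁ x₂ x₃ 0
      = LL ((f x₁ 0 - f x₁ 1) + (f x₂ 0 - f x₂ 1) + (f x₃ 0 - f x₃ 1)) := by
  unfold toyLoss
  rw [(neg_log_softmax _).1]
  congr 1; ring

lemma toyLoss_one (f : Fin 3 → Fin 2 → ℝ) (x₁ x₂ x₃ : Fin 3) :
    toyLoss f x₁ x₂ x₃ 1
      = LL (-((f x₁ 0 - f x₁ 1) + (f x₂ 0 - f x₂ 1) + (f x₃ 0 - f x₃ 1))) := by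
  unfold toyLoss
  rw [(neg_log_softmax _).2]
  congr 1; ring

lemma toyRisk_eq (ε : ℝ) (f : Fin 3 → Fin 2 → ℝ) (a b c : ℝ)
    (ha : a = f 0 0 - f 0 1) (hb : b = f 1 0 - f 1 1) (hc : c = f 2 0 - f 2 1) :
    toyRisk ε f =
      (1 - ε) ^ 3 / 2 * (LL (3*a) + LL (-(3*a)))
      + ε * (1 - ε) ^ 2 / 2 *
          ((LL (-(2*a+b)) + 2 * LL (-(-(2*a+b)))) + (LL (2*a+c) + 2 * LL (-(2*a+c))))
      + ε ^ 2 * (1 - ε) / 2 *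
          (LL (a+2*b) + 2 * LL (a+b+c) + LL (-(a+2*c)) + 2 * LL (-(a+b+c)))
      + ε ^ 3 / 2 * (LL (2*b+c) + LL (-(b+2*c))) := by
  subst ha hb hc
  unfold toyRisk
  rw [toyLoss_zero, toyLoss_zero, toyLoss_zero, toyLoss_zero, toyLoss_zero,
    toyLoss_zero, toyLoss_zero, toyLoss_zero,
    toyLoss_one, toyLoss_one, toyLoss_one, toyLoss_one, toyLoss_one, toyLoss_one,
    toyLoss_one, toyLoss_one]
  ring_nf

lemma LL_zero : LL 0 = Real.log 2 := by unfold LL; norm_num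

lemma LL_log2 : LL (Real.log 2) = Real.log (3/2) := by
  unfold LL; rw [Real.exp_neg, Real.exp_log two_pos]; norm_num

lemma LL_neg_log2 : LL (-Real.log 2) = Real.log 3 := by
  unfold LL; rw [neg_neg, Real.exp_log two_pos]; norm_num

lemma LL_two_log2 : LL (2 * Real.log 2) = Real.log (5/4) := by
  unfold LL
  rw [show -(2*Real.log 2) = Real.log (1/4) by
      rw [show (1/4:ℝ) = (2^2)⁻¹ by norm_num, Real.log_inv, Real.log_pow]; push_cast; ring,
    Real.exp_log (by norm_num)]
  norm_num

lemma risk_g_le (ε : ℝ) (hε : ε ∈ Set.Ioo (0:ℝ) 1) :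
    toyRisk ε ![![0,0], ![Real.log 2, 0], ![0, Real.log 2]]
      ≤ (1-ε)^3/2 * (2*Real.log 2) + ε*(1-ε)^2/2 * (2*Real.log (27/4))
        + 4*Real.log 2 * ε^2 := by
  rw [toyRisk_eq ε _ 0 (Real.log 2) (-Real.log 2) (by simp) (by simp) (by simp)]
  norm_num [LL_zero, LL_log2, LL_neg_log2, LL_two_log2,
    show 2*Real.log 2 + -Real.log 2 = Real.log 2 from by ring]
  have h27 : Real.log 3 + 2*Real.log (3/2) = Real.log (27/4) := by
    rw [show (27/4:ℝ) = 3*(3/2)^2 by norm_num, Real.log_mul (by norm_num) (by norm_num),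
      Real.log_pow]
    push_cast; ring
  have h54 : Real.log (5/4) ≤ Real.log 2 := Real.log_le_log (by norm_num) (by norm_num)
  have h32 : Real.log (3/2) ≤ Real.log 2 := Real.log_le_log (by norm_num) (by norm_num)
  have hl2 : (0:ℝ) ≤ Real.log 2 := Real.log_nonneg (by norm_num)
  obtain ⟨h1, h2⟩ := hε
  have e21 : (0:ℝ) ≤ ε^2*(1-ε) := by nlinarith
  have e3 : (0:ℝ) ≤ ε^3 := by positivity
  nlinarith [mul_le_mul_of_nonneg_left h54 e21, mul_le_mul_of_nonneg_left h32 e3,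
    mul_le_mul_of_nonneg_right (show ε^3 ≤ ε^2 by nlinarith) hl2,
    mul_nonneg (mul_nonneg e3 hl2) h1.le, mul_nonneg e21 hl2]

-- core lemmas from part a
lemma LL_nonneg (t : ℝ) : 0 ≤ LL t := by
  have : (1:ℝ) ≤ 1 + Real.exp (-t) := by nlinarith [Real.exp_pos (-t)]
  exact Real.log_nonneg this

lemma Spair_eq (t : ℝ) : LL t + LL (-t) = Real.log ((Real.exp t + 1)^2 / Real.exp t) := by
  unfold LL
  rw [← Real.log_mul (by positivity) (by positivity), neg_neg]
  congr 1
  have h := Real.exp_pos t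
  have h2 := Real.exp_neg t
  field_simp [h2]
  have h3 : Real.exp (-t) * Real.exp t = 1 := by rw [← Real.exp_add]; simp
  linear_combination (1 + Real.exp t) * h3

lemma Lpair_eq (t : ℝ) : LL t + 2 * LL (-t) = Real.log ((Real.exp t + 1)^3 / Real.exp t) := by
  unfold LL
  rw [neg_neg, show Real.log (1 + Real.exp (-t)) + 2 * Real.log (1 + Real.exp t)
      = Real.log ((1 + Real.exp (-t)) * (1 + Real.exp t)^2) by
    rw [Real.log_mul (by positivity) (by positivity), Real.log_pow]; push_cast; ring]
  congr 1
  have h := Real.exp_pos t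
  have h2 := Real.exp_neg t
  field_simp [h2]
  have h3 : Real.exp (-t) * Real.exp t = 1 := by rw [← Real.exp_add]; simp
  linear_combination (1 + 2 * Real.exp t + Real.exp t ^ 2) * h3

lemma Spair_ge (t : ℝ) : 2 * Real.log 2 ≤ LL t + LL (-t) := by
  rw [Spair_eq]
  have h := Real.exp_pos t
  have h4 : (4:ℝ) ≤ (Real.exp t + 1)^2 / Real.exp t := by
    rw [le_div_iff₀ h]; nlinarith [sq_nonneg (Real.exp t - 1)]
  calc 2 * Real.log 2 = Real.log 4 := by
        rw [show (4:ℝ) = 2^2 by norm_num, Real.log_pow]; push_cast; ring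
    _ ≤ _ := Real.log_le_log (by norm_num) h4

lemma Lpair_ge (t : ℝ) : Real.log (27/4) ≤ LL t + 2 * LL (-t) := by
  rw [Lpair_eq]
  have h := Real.exp_pos t
  have h4 : (27/4:ℝ) ≤ (Real.exp t + 1)^3 / Real.exp t := by
    rw [le_div_iff₀ h]; nlinarith [sq_nonneg (2*Real.exp t - 1), h.le]
  exact Real.log_le_log (by norm_num) h4

lemma log_le_imp {x c δ : ℝ} (hx : 0 < x) (hc : 0 < c)
    (h : Real.log x ≤ Real.log c + δ) : x ≤ c * Real.exp δ := by
  have := Real.exp_le_exp.mpr h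
  rwa [Real.exp_add, Real.exp_log hc, Real.exp_log hx] at this

lemma key_sq {u δ : ℝ} (hu : 0 < u) (hδ : 0 ≤ δ) (hδ1 : δ ≤ 1)
    (h : Real.log ((u+1)^2/u) ≤ 2 * Real.log 2 + δ) :
    (u - 1)^2 ≤ 48 * (Real.exp δ - 1) := by
  have h2 : Real.log ((u+1)^2/u) ≤ Real.log 4 + δ := by
    rwa [show Real.log 4 = 2 * Real.log 2 by
      rw [show (4:ℝ) = 2^2 by norm_num, Real.log_pow]; push_cast; ring]
  have h3 : (u+1)^2/u ≤ 4 * Real.exp δ := log_le_imp (by positivity) (by norm_num) h2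
  have h4 : (u+1)^2 ≤ 4 * Real.exp δ * u := by
    rwa [div_le_iff₀ hu] at h3
  have he : Real.exp δ ≤ 3 := by
    calc Real.exp δ ≤ Real.exp 1 := Real.exp_le_exp.mpr hδ1
      _ ≤ 3 := by linarith [Real.exp_one_lt_d9.le]
  have hub : u ≤ 12 := by nlinarith
  have he0 : (1:ℝ) ≤ Real.exp δ := by
    rw [show (1:ℝ) = Real.exp 0 by simp]; exact Real.exp_le_exp.mpr hδ
  nlinarith

lemma key_psi {u δ : ℝ} (hu : 0 < u) (hδ : 0 ≤ δ)
    (h : Real.log ((u+1)^3/u) ≤ Real.log (27/4) + δ) :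
    (2*u - 1)^2 ≤ 27 * (Real.exp δ - 1) := by
  have h3 : (u+1)^3/u ≤ 27/4 * Real.exp δ := log_le_imp (by positivity) (by norm_num) h
  have h4 : (u+1)^3 ≤ 27/4 * Real.exp δ * u := by
    rwa [div_le_iff₀ hu] at h3
  have hid : (u+1)^3 = 27/4 * u + (2*u-1)^2 * (u+4) / 4 := by ring
  have h5 : (2*u-1)^2 * (u+4) ≤ 27 * (Real.exp δ - 1) * u := by nlinarith
  have he0 : (1:ℝ) ≤ Real.exp δ := by
    rw [show (1:ℝ) = Real.exp 0 by simp]; exact Real.exp_le_exp.mpr hδ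
  nlinarith [sq_nonneg (2*u-1), hu.le]

lemma arith_extract (w0 w1 r X Y Z l2 m : ℝ) (hw0 : 1/4 ≤ w0) (hw1 : 0 ≤ w1)
    (hX : 2*l2 ≤ X) (hY : m ≤ Y) (hZ : m ≤ Z)
    (key : w0*X + w1*(Y+Z) ≤ w0*(2*l2) + w1*(2*m) + r) :
    X ≤ 2*l2 + 4*r ∧ w1*(Y-m) ≤ r ∧ w1*(Z-m) ≤ r := by
  have hw0' : (0:ℝ) ≤ w0 := by linarith
  have p0 := mul_nonneg hw0' (sub_nonneg.mpr hX)
  have p1 := mul_nonneg hw1 (sub_nonneg.mpr hY)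
  have p2 := mul_nonneg hw1 (sub_nonneg.mpr hZ)
  have k1 := mul_le_mul_of_nonneg_right hw0 (sub_nonneg.mpr hX)
  refine ⟨by nlinarith, by nlinarith, by nlinarith⟩

set_option maxHeartbeats 1000000 in
lemma minimizer_bounds (ε : ℝ) (hε : ε ∈ Set.Ioo (0:ℝ) (1/10))
    (f : Fin 3 → Fin 2 → ℝ)
    (hm : toyRisk ε f ≤ toyRisk ε ![![0,0], ![Real.log 2, 0], ![0, Real.log 2]])
    (a b c : ℝ)
    (ha : a = f 0 0 - f 0 1) (hb : b = f 1 0 - f 1 1) (hc : c = f 2 0 - f 2 1) :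
    LL (3*a) + LL (-(3*a)) ≤ 2 * Real.log 2 + 16 * Real.log 2 * ε^2
    ∧ LL (-(2*a+b)) + 2 * LL (2*a+b) ≤ Real.log (27/4) + 16 * Real.log 2 * ε
    ∧ LL (2*a+c) + 2 * LL (-(2*a+c)) ≤ Real.log (27/4) + 16 * Real.log 2 * ε := by
  obtain ⟨h1, h2⟩ := hε
  have h2' : ε < 1 := by linarith
  have hm2 : toyRisk ε f ≤ (1-ε)^3/2 * (2*Real.log 2)
      + ε*(1-ε)^2/2 * (2*Real.log (27/4)) + 4*Real.log 2 * ε^2 :=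
    hm.trans (risk_g_le ε ⟨h1, h2'⟩)
  rw [toyRisk_eq ε f a b c ha hb hc, neg_neg (2*a+b)] at hm2
  set w0 := (1-ε)^3/2 with hw0d
  set w1 := ε*(1-ε)^2/2 with hw1d
  set X := LL (3*a) + LL (-(3*a)) with hXd
  set Y := LL (-(2*a+b)) + 2 * LL (2*a+b) with hYd
  set Z := LL (2*a+c) + 2 * LL (-(2*a+c)) with hZd
  set m := Real.log (27/4) with hmd
  have hXge : 2 * Real.log 2 ≤ X := Spair_ge (3*a)
  have hYge : m ≤ Y := by
    have := Lpair_ge (-(2*a+b)); rwa [neg_neg] at this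
  have hZge : m ≤ Z := Lpair_ge (2*a+c)
  clear_value w0 w1 X Y Z m
  have hS2 : 0 ≤ LL (a+2*b) + 2 * LL (a+b+c) + LL (-(a+2*c)) + 2 * LL (-(a+b+c)) := by
    have := LL_nonneg (a+2*b); have := LL_nonneg (a+b+c)
    have := LL_nonneg (-(a+2*c)); have := LL_nonneg (-(a+b+c)); linarith
  have hS3 : 0 ≤ LL (2*b+c) + LL (-(b+2*c)) := by
    have := LL_nonneg (2*b+c); have := LL_nonneg (-(b+2*c)); linarith
  have t2 : 0 ≤ ε^2 * (1-ε)/2 * (LL (a+2*b) + 2 * LL (a+b+c) + LL (-(a+2*c))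
      + 2 * LL (-(a+b+c))) := mul_nonneg (by nlinarith) hS2
  have t3 : 0 ≤ ε^3/2 * (LL (2*b+c) + LL (-(b+2*c))) :=
    mul_nonneg (by positivity) hS3
  have key : w0*X + w1*(Y+Z) ≤ w0*(2*Real.log 2) + w1*(2*m) + 4*Real.log 2 * ε^2 := by
    linarith
  have hw0 : (1:ℝ)/4 ≤ w0 := by rw [hw0d]; nlinarith
  have hw1' : ε/4 ≤ w1 := by rw [hw1d]; nlinarith
  have hw1 : (0:ℝ) ≤ w1 := by linarith
  obtain ⟨c1, c2, c3⟩ := arith_extract w0 w1 (4*Real.log 2 * ε^2) X Y Z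
    (Real.log 2) m hw0 hw1 hXge hYge hZge key
  refine ⟨by linarith, ?_, ?_⟩
  · have u1 : ε/4 * (Y-m) ≤ w1 * (Y-m) :=
      mul_le_mul_of_nonneg_right hw1' (sub_nonneg.mpr hYge)
    have step : ε * (Y - m) ≤ ε * (16 * Real.log 2 * ε) := by nlinarith
    have := le_of_mul_le_mul_left step h1
    linarith
  · have u1 : ε/4 * (Z-m) ≤ w1 * (Z-m) :=
      mul_le_mul_of_nonneg_right hw1' (sub_nonneg.mpr hZge)
    have step : ε * (Z - m) ≤ ε * (16 * Real.log 2 * ε) := by nlinarith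
    have := le_of_mul_le_mul_left step h1
    linarith

lemma sq_to_zero {α : Type*} {l : Filter α} {g : α → ℝ}
    (h : Tendsto (fun x => (g x)^2) l (𝓝 0)) : Tendsto g l (𝓝 0) := by
  rw [tendsto_zero_iff_abs_tendsto_zero]
  have hs := (Real.continuous_sqrt.tendsto 0).comp h
  have : (fun x => √x) ∘ (fun x => g x ^ 2) = abs ∘ g := by
    funext x; simp [Function.comp, Real.sqrt_sq_eq_abs]
  rw [this] at hs
  simpa using hs

lemma softmax_fst (v : Fin 2 → ℝ) :
    softmax v 0 = Real.exp (v 0 - v 1) / (Real.exp (v 0 - v 1) + 1) := by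
  rw [softmax_two, Real.exp_sub]
  have h0 := Real.exp_pos (v 0)
  have h1 := Real.exp_pos (v 1)
  field_simp

lemma softmax_snd (v : Fin 2 → ℝ) :
    softmax v 1 = 1 / (Real.exp (v 0 - v 1) + 1) := by
  rw [softmax_two, Real.exp_sub]
  have h0 := Real.exp_pos (v 0)
  have h1 := Real.exp_pos (v 1)
  field_simp

lemma tendsto_rhs (K : ℝ) (p : ℕ) (hp : p ≠ 0) :
    Tendsto (fun ε : ℝ => K * (Real.exp (16 * Real.log 2 * ε^p) - 1))
      (𝓝[>] (0:ℝ)) (𝓝 0) := by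
  have hc : Continuous (fun ε : ℝ => K * (Real.exp (16 * Real.log 2 * ε^p) - 1)) := by
    continuity
  have ht := (hc.tendsto 0).mono_left (nhdsWithin_le_nhds (s := Set.Ioi (0:ℝ)))
  have h0 : K * (Real.exp (16 * Real.log 2 * (0:ℝ)^p) - 1) = 0 := by
    rw [zero_pow hp]; simp
  rwa [h0] at ht

lemma exp_limits (fε : ℝ → Fin 3 → Fin 2 → ℝ)
    (hmin : ∀ ε ∈ Set.Ioo (0 : ℝ) 1,
      ∀ f : Fin 3 → Fin 2 → ℝ, toyRisk ε (fε ε) ≤ toyRisk ε f) :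
    Tendsto (fun ε => Real.exp (fε ε 0 0 - fε ε 0 1)) (𝓝[>] (0:ℝ)) (𝓝 1)
    ∧ Tendsto (fun ε => Real.exp (fε ε 1 0 - fε ε 1 1)) (𝓝[>] (0:ℝ)) (𝓝 2)
    ∧ Tendsto (fun ε => Real.exp (fε ε 2 0 - fε ε 2 1)) (𝓝[>] (0:ℝ)) (𝓝 (1/2)) := by
  set aa : ℝ → ℝ := fun ε => fε ε 0 0 - fε ε 0 1 with haa
  set bb : ℝ → ℝ := fun ε => fε ε 1 0 - fε ε 1 1 with hbb
  set cc : ℝ → ℝ := fun ε => fε ε 2 0 - fε ε 2 1 with hcc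
  have hev : ∀ᶠ ε in 𝓝[>] (0:ℝ), ε ∈ Set.Ioo (0:ℝ) (1/10) :=
    Filter.eventually_of_mem (Ioo_mem_nhdsGT_of_mem ⟨le_rfl, by norm_num⟩)
      (fun x hx => hx)
  have hb : ∀ᶠ ε in 𝓝[>] (0:ℝ),
      (Real.exp (3 * aa ε) - 1)^2 ≤ 48 * (Real.exp (16 * Real.log 2 * ε^2) - 1)
      ∧ (2 * Real.exp (-(2 * aa ε + bb ε)) - 1)^2
          ≤ 27 * (Real.exp (16 * Real.log 2 * ε^1) - 1)
      ∧ (2 * Real.exp (2 * aa ε + cc ε) - 1)^2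
          ≤ 27 * (Real.exp (16 * Real.log 2 * ε^1) - 1) := by
    refine hev.mono (fun ε hε => ?_)
    have hm := hmin ε ⟨hε.1, lt_trans hε.2 (by norm_num)⟩
      ![![0,0], ![Real.log 2, 0], ![0, Real.log 2]]
    obtain ⟨c1, c2, c3⟩ := minimizer_bounds ε hε (fε ε) hm (aa ε) (bb ε) (cc ε)
      rfl rfl rfl
    have hl2 : (0:ℝ) < Real.log 2 := Real.log_pos (by norm_num)
    have hl2' : Real.log 2 < 0.6931471808 := Real.log_two_lt_d9
    obtain ⟨h1, h2⟩ := hε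
    have hδ0 : (0:ℝ) ≤ 16 * Real.log 2 * ε^2 := by positivity
    have hδ0' : 16 * Real.log 2 * ε^2 ≤ 1 := by nlinarith
    have hδ1 : (0:ℝ) ≤ 16 * Real.log 2 * ε := by positivity
    refine ⟨?_, ?_, ?_⟩
    · rw [Spair_eq] at c1
      have := key_sq (Real.exp_pos (3 * aa ε)) hδ0 hδ0' c1
      simpa using this
    · have e := Lpair_eq (-(2 * aa ε + bb ε))
      rw [neg_neg] at e
      rw [e] at c2
      have := key_psi (Real.exp_pos (-(2 * aa ε + bb ε))) (by positivity) c2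
      simpa using this
    · rw [Lpair_eq] at c3
      have := key_psi (Real.exp_pos (2 * aa ε + cc ε)) (by positivity) c3
      simpa using this
  have h3a : Tendsto (fun ε => Real.exp (3 * aa ε) - 1) (𝓝[>] (0:ℝ)) (𝓝 0) :=
    sq_to_zero (squeeze_zero' (.of_forall fun ε => sq_nonneg _)
      (hb.mono fun ε h => h.1) (tendsto_rhs 48 2 (by norm_num)))
  have hA3 : Tendsto (fun ε => Real.exp (3 * aa ε)) (𝓝[>] (0:ℝ)) (𝓝 1) := by
    have := h3a.add tendsto_const_nhds (b := (1:ℝ))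
    norm_num at this
    exact this
  have hexpA : Tendsto (fun ε => Real.exp (aa ε)) (𝓝[>] (0:ℝ)) (𝓝 1) := by
    have hc : ContinuousAt (fun x : ℝ => x ^ ((1:ℝ)/3)) 1 :=
      Real.continuousAt_rpow_const 1 _ (Or.inl one_ne_zero)
    have h2 := hc.tendsto.comp hA3
    rw [Real.one_rpow] at h2
    exact h2.congr (fun ε => by
      show (Real.exp (3 * aa ε)) ^ ((1:ℝ)/3) = Real.exp (aa ε)
      rw [Real.rpow_def_of_pos (Real.exp_pos _), Real.log_exp]
      congr 1; ring)
  have h2abz : Tendsto (fun ε => 2 * Real.exp (-(2 * aa ε + bb ε)) - 1)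
      (𝓝[>] (0:ℝ)) (𝓝 0) :=
    sq_to_zero (squeeze_zero' (.of_forall fun ε => sq_nonneg _)
      (hb.mono fun ε h => h.2.1) (tendsto_rhs 27 1 (by norm_num)))
  have hB2 : Tendsto (fun ε => Real.exp (-(2 * aa ε + bb ε))) (𝓝[>] (0:ℝ)) (𝓝 (1/2)) := by
    have h := (h2abz.add (tendsto_const_nhds (x := (1:ℝ)))).div_const 2
    norm_num at h
    exact h.congr (fun ε => by ring)
  have hexp2ab : Tendsto (fun ε => Real.exp (2 * aa ε + bb ε)) (𝓝[>] (0:ℝ)) (𝓝 2) := by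
    have h := hB2.inv₀ (by norm_num)
    norm_num at h
    exact h.congr (fun ε => by
      rw [← Real.exp_neg]; congr 1; ring)
  have hAA : Tendsto (fun ε => Real.exp (aa ε) * Real.exp (aa ε)) (𝓝[>] (0:ℝ))
      (𝓝 1) := by
    have := hexpA.mul hexpA; norm_num at this; exact this
  have hexpB : Tendsto (fun ε => Real.exp (bb ε)) (𝓝[>] (0:ℝ)) (𝓝 2) := by
    have h := hexp2ab.div hAA (by norm_num)
    norm_num at h
    exact h.congr (fun ε => by
      show Real.exp (2 * aa ε + bb ε) / (Real.exp (aa ε) * Real.exp (aa ε))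
          = Real.exp (bb ε)
      rw [← Real.exp_add, ← Real.exp_sub]; congr 1; ring)
  have h2acz : Tendsto (fun ε => 2 * Real.exp (2 * aa ε + cc ε) - 1)
      (𝓝[>] (0:ℝ)) (𝓝 0) :=
    sq_to_zero (squeeze_zero' (.of_forall fun ε => sq_nonneg _)
      (hb.mono fun ε h => h.2.2) (tendsto_rhs 27 1 (by norm_num)))
  have hexp2ac : Tendsto (fun ε => Real.exp (2 * aa ε + cc ε)) (𝓝[>] (0:ℝ))
      (𝓝 (1/2)) := by
    have h := (h2acz.add (tendsto_const_nhds (x := (1:ℝ)))).div_const 2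
    norm_num at h
    exact h.congr (fun ε => by ring)
  have hexpC : Tendsto (fun ε => Real.exp (cc ε)) (𝓝[>] (0:ℝ)) (𝓝 (1/2)) := by
    have h := hexp2ac.div hAA (by norm_num)
    norm_num at h
    exact h.congr (fun ε => by
      show Real.exp (2 * aa ε + cc ε) / (Real.exp (aa ε) * Real.exp (aa ε))
          = Real.exp (cc ε)
      rw [← Real.exp_add, ← Real.exp_sub]; congr 1; ring)
  exact ⟨hexpA, hexpB, hexpC⟩


/-- Any family of global minimizers `f_ε` of the toy hard OKO risk satisfies, as
`ε → 0⁺`: `softmax (f_ε 0) → (1/2, 1/2)`, `softmax (f_ε 1) → (2/3, 1/3)` and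
`softmax (f_ε 2) → (1/3, 2/3)`. -/
theorem toyRisk_minimizers_limit (fε : ℝ → Fin 3 → Fin 2 → ℝ)
    (hmin : ∀ ε ∈ Set.Ioo (0 : ℝ) 1,
      ∀ f : Fin 3 → Fin 2 → ℝ, toyRisk ε (fε ε) ≤ toyRisk ε f) :
    Tendsto (fun ε => softmax (fε ε 0)) (nhdsWithin 0 (Set.Ioi 0))
        (nhds ![1 / 2, 1 / 2])
      ∧ Tendsto (fun ε => softmax (fε ε 1)) (nhdsWithin 0 (Set.Ioi 0))
          (nhds ![2 / 3, 1 / 3])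
      ∧ Tendsto (fun ε => softmax (fε ε 2)) (nhdsWithin 0 (Set.Ioi 0))
          (nhds ![1 / 3, 2 / 3]) := by
  obtain ⟨hA, hB, hC⟩ := exp_limits fε hmin
  have main : ∀ (x : Fin 3) (L : ℝ),
      Tendsto (fun ε => Real.exp (fε ε x 0 - fε ε x 1)) (𝓝[>] (0:ℝ)) (𝓝 L) →
      0 < L →
      Tendsto (fun ε => softmax (fε ε x)) (𝓝[>] (0:ℝ))
        (𝓝 ![L / (L+1), 1 / (L+1)]) := by
    intro x L hL hLpos
    rw [tendsto_pi_nhds]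
    intro j
    fin_cases j
    · have h := hL.div (hL.add (tendsto_const_nhds (x := (1:ℝ)))) (by positivity)
      simp only [Matrix.cons_val_zero]
      exact h.congr (fun ε => (softmax_fst (fε ε x)).symm)
    · have h := (tendsto_const_nhds (x := (1:ℝ))).div
        (hL.add (tendsto_const_nhds (x := (1:ℝ)))) (by positivity)
      simp only [Matrix.cons_val_one, Matrix.head_cons]
      exact h.congr (fun ε => (softmax_snd (fε ε x)).symm)
  refine ⟨?_, ?_, ?_⟩
  · have h := main 0 1 hA one_pos
    norm_num at h ⊢
    exact h
  · have h := main 1 2 hB two_pos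
    norm_num at h ⊢
    exact h
  · have h := main 2 (1/2) hC (by norm_num)
    norm_num at h ⊢
    exact h
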